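/- Let q be an odd prime, K a finite field with q elements, and L a finite field with q^2 elements that is an algebra over K. The assignment sending each unit c ∈ L^× with c^(q+1) = 1 to the K-linear automorphism of L given by v ↦ c·v is an injective group homomorphism, and its image is exactly the set of K-linear automorphisms f of L satisfying (f v)^(q+1) = v^(q+1) for all v ∈ L and having determinant 1 (as a K-linear endomorphism of L). -/

import Mathlib

/-- The subgroup of `Lˣ` of elements `c` with `c^(q+1) = 1`. -/
def normOneSubgroup (q : ℕ) (L : Type*) [Field L] : Subgroup Lˣ where
  carrier := {c : Lˣ | c ^ (q + 1) = 1}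
  one_mem' := one_pow _
  mul_mem' := by
    intro a b ha hb
    simp only [Set.mem_setOf_eq] at *
    rw [mul_pow, ha, hb, one_mul]
  inv_mem' := by
    intro a ha
    simp only [Set.mem_setOf_eq] at *
    rw [inv_pow, ha, inv_one]

/-- For an odd prime `q`, the assignment sending each unit `c ∈ Lˣ` with
`c^(q+1) = 1` to the `K`-linear automorphism `v ↦ c·v` is an injective group homomorphism
whose image is exactly the set of `K`-linear automorphisms `f` of `L` with
`(f v)^(q+1) = v^(q+1)` for all `v` and determinant `1`. -/
theorem mulBy_norm_one_units_injective_range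
    (q : ℕ) (hq : q.Prime) (hodd : Odd q)
    (L : Type*) [Field L] [Fintype L] (hL : Fintype.card L = q ^ 2)
    (K : Type*) [Field K] [Fintype K] (hK : Fintype.card K = q) [Algebra K L] :
    ∃ φ : normOneSubgroup q L →* (L ≃ₗ[K] L),
      (∀ (c : normOneSubgroup q L) (v : L), φ c v = ((c : Lˣ) : L) * v) ∧
      Function.Injective φ ∧
      (∀ f : L ≃ₗ[K] L, f ∈ φ.range ↔
        ((∀ v : L, (f v) ^ (q + 1) = v ^ (q + 1)) ∧
          LinearMap.det (f : L →ₗ[K] L) = 1)) := by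
  classical
  haveI : Fact q.Prime := ⟨hq⟩
  -- characteristic
  have hCharK : CharP K q := by
    obtain ⟨p, hp⟩ := CharP.exists K
    obtain ⟨n, hpp, hcard⟩ := FiniteField.card K p
    have hpq : p = q := by
      have hdvd : p ∣ q := hK ▸ hcard ▸ dvd_pow_self p n.ne_zero
      exact (Nat.prime_dvd_prime_iff_eq hpp hq).mp hdvd
    exact hpq ▸ hp
  haveI := hCharK
  haveI hCharL : CharP L q := charP_of_injective_algebraMap (algebraMap K L).injective q
  have hq2 : q ≠ 2 := by rw [Nat.odd_iff] at hodd; omega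
  have h2L : (2 : L) ≠ 0 := by
    intro h
    have h' : ((2 : ℕ) : L) = 0 := by exact_mod_cast h
    have := (CharP.cast_eq_zero_iff L q 2).mp h'
    have := Nat.le_of_dvd (by norm_num) this
    have := hq.two_le
    omega
  have h2K : (2 : K) ≠ 0 := fun h =>
    h2L (by rw [← map_ofNat (algebraMap K L) 2, h, map_zero])
  have halg : ∀ s : K, (algebraMap K L s) ^ q = algebraMap K L s := by
    intro s
    rw [← map_pow]
    congr 1
    have := FiniteField.pow_card s
    rwa [hK] at this
  have hsmul : ∀ (x : K) (y : L), x • y = algebraMap K L x * y := fun x y => Algebra.smul_def x y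
  -- existence of α with α^q = -α, α ≠ 0
  obtain ⟨g, hg⟩ := IsCyclic.exists_generator (α := Lˣ)
  have hord : orderOf g = q ^ 2 - 1 := by
    rw [orderOf_eq_card_of_forall_mem_zpowers hg, Nat.card_units, Nat.card_eq_fintype_card, hL]
  obtain ⟨k, hk⟩ := hodd
  have hk1 : 1 ≤ k := by have := hq.two_le; omega
  have e1 : q ^ 2 = 4 * k ^ 2 + 4 * k + 1 := by subst hk; ring
  have hm : (q + 1) / 2 = k + 1 := by omega
  have hmul : ((q + 1) / 2) * (q - 1) = (q ^ 2 - 1) / 2 := by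
    have e2 : (k + 1) * (2 * k) = 2 * k ^ 2 + 2 * k := by ring
    have e3 : q - 1 = 2 * k := by omega
    rw [hm, e3, e2]
    omega
  set α : L := ((g ^ ((q + 1) / 2) : Lˣ) : L) with hαdef
  have hα0 : α ≠ 0 := Units.ne_zero _
  have hαpow : α ^ (q - 1) = -1 := by
    have hu : (g ^ ((q + 1) / 2)) ^ (q - 1) = g ^ ((q ^ 2 - 1) / 2) := by
      rw [← pow_mul, hmul]
    have hsq : ((g ^ ((q ^ 2 - 1) / 2)) : Lˣ) ^ 2 = 1 := by
      rw [← pow_mul]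
      have : (q ^ 2 - 1) / 2 * 2 = q ^ 2 - 1 := by omega
      rw [this, ← hord]
      exact pow_orderOf_eq_one g
    have hne : (g ^ ((q ^ 2 - 1) / 2) : Lˣ) ≠ 1 := by
      intro h
      have := orderOf_dvd_of_pow_eq_one h
      rw [hord] at this
      have := Nat.le_of_dvd (by omega) this
      omega
    have hν2 : (((g ^ ((q ^ 2 - 1) / 2) : Lˣ) : L)) ^ 2 = 1 := by
      rw [← Units.val_pow_eq_pow_val, hsq, Units.val_one]
    have hνne : (((g ^ ((q ^ 2 - 1) / 2) : Lˣ) : L)) ≠ 1 := by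
      intro h; exact hne (Units.ext (by rw [h, Units.val_one]))
    have hν : (((g ^ ((q ^ 2 - 1) / 2) : Lˣ) : L)) = -1 := by
      have hfac : ((((g ^ ((q ^ 2 - 1) / 2) : Lˣ) : L)) - 1) *
          ((((g ^ ((q ^ 2 - 1) / 2) : Lˣ) : L)) + 1) = 0 := by linear_combination hν2
      rcases mul_eq_zero.mp hfac with h | h
      · exact absurd (by linear_combination h) hνne
      · linear_combination h
    calc α ^ (q - 1) = ((g ^ ((q + 1) / 2)) ^ (q - 1) : Lˣ) := by
          rw [hαdef, ← Units.val_pow_eq_pow_val]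
      _ = ((g ^ ((q ^ 2 - 1) / 2) : Lˣ) : L) := by rw [hu]
      _ = -1 := hν
  have hαq : α ^ q = -α := by
    have hq1 : q - 1 + 1 = q := by have := hq.two_le; omega
    calc α ^ q = α ^ (q - 1) * α := by rw [← pow_succ, hq1]
      _ = -α := by rw [hαpow]; ring
  -- basis
  have hrank : Module.finrank K L = 2 := by
    have hcard := Module.card_eq_pow_finrank (K := K) (V := L)
    rw [hK, hL] at hcard
    exact (Nat.pow_right_injective hq.two_le hcard.symm)
  have hli : LinearIndependent K ![(1 : L), α] := by
    rw [linearIndependent_fin2]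
    refine ⟨hα0, fun a ha => ?_⟩
    have ha0 : a ≠ 0 := by rintro rfl; simp at ha
    have hαval : α = a⁻¹ • (1 : L) := by
      have := congrArg (fun z => (a⁻¹ : K) • z) ha
      simpa [smul_smul, inv_mul_cancel₀ ha0] using this
    have : α ^ q = α := by rw [hαval, hsmul, mul_one, halg]
    rw [hαq] at this
    have : (2 : L) * α = 0 := by linear_combination -this
    rcases mul_eq_zero.mp this with h | h
    · exact h2L h
    · exact hα0 h
  set b : Module.Basis (Fin 2) K L :=
    basisOfLinearIndependentOfCardEqFinrank hli (by rw [Fintype.card_fin, hrank]) with hbdef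
  have hb : ⇑b = ![(1 : L), α] := coe_basisOfLinearIndependentOfCardEqFinrank hli _
  have hb0 : b 0 = 1 := by rw [hb]; rfl
  have hb1 : b 1 = α := by rw [hb]; rfl
  have hkey : ∀ (x y : K), b.repr (x • (1 : L) + y • α) 0 = x ∧
      b.repr (x • (1 : L) + y • α) 1 = y := by
    intro x y
    rw [← hb0, ← hb1]
    simp [Finsupp.single_apply]
  have decomp : ∀ x : L, x = b.repr x 0 • (1 : L) + b.repr x 1 • α := by
    intro x
    have := b.sum_repr x
    rw [Fin.sum_univ_two, hb0, hb1] at this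
    exact this.symm
  -- determinant formula
  have detcalc : ∀ (F : L →ₗ[K] L) (a₀ a₁ d₀ d₁ : K),
      F 1 = a₀ • (1 : L) + a₁ • α → F α = d₀ • (1 : L) + d₁ • α →
      LinearMap.det F = a₀ * d₁ - a₁ * d₀ := by
    intro F a₀ a₁ d₀ d₁ h1 h2
    rw [← LinearMap.det_toMatrix b, Matrix.det_fin_two]
    simp only [LinearMap.toMatrix_apply, hb0, hb1, h1, h2]
    rw [(hkey a₀ a₁).1, (hkey a₀ a₁).2, (hkey d₀ d₁).1, (hkey d₀ d₁).2]
    ring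
  -- α² lives in K
  set u : K := b.repr (α ^ 2) 0 with hu
  set w : K := b.repr (α ^ 2) 1 with hw
  have hα2 : α ^ 2 = u • (1 : L) + w • α := decomp _
  have hw0 : w = 0 := by
    have hq1 : (α ^ 2) ^ q = α ^ 2 := by
      rw [← pow_mul, mul_comm, pow_mul, hαq]; ring
    have hq2' : (u • (1 : L) + w • α) ^ q = u • (1 : L) - w • α := by
      rw [hsmul, hsmul, add_pow_char, mul_pow, mul_pow, one_pow, halg, halg, hαq]
      ring
    rw [hα2] at hq1
    rw [hq2'] at hq1
    have : (2 : L) * (algebraMap K L w * α) = 0 := by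
      rw [hsmul, hsmul] at hq1
      linear_combination -hq1
    rcases mul_eq_zero.mp this with h | h
    · exact absurd h h2L
    rcases mul_eq_zero.mp h with h | h
    · exact (algebraMap K L).injective (by rw [h, map_zero])
    · exact absurd h hα0
  have hαα : α * α = algebraMap K L u := by
    rw [hw0, zero_smul, add_zero, hsmul, mul_one] at hα2
    rw [← hα2]; ring
  -- norm formula
  have hnorm : ∀ x : L, x ^ (q + 1) =
      algebraMap K L ((b.repr x 0) ^ 2 - (b.repr x 1) ^ 2 * u) := by
    intro x
    set s := b.repr x 0
    set t := b.repr x 1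
    have hx := decomp x
    have hxq : x ^ q = algebraMap K L s - algebraMap K L t * α := by
      rw [hx, hsmul, hsmul, add_pow_char, mul_pow, mul_pow, one_pow, halg, halg, hαq]
      ring
    rw [pow_succ, hxq]
    conv_lhs => rw [hx]
    rw [hsmul, hsmul, map_sub, map_mul, map_pow, map_pow]
    linear_combination (-(algebraMap K L t ^ 2)) * hαα
  -- multiplication by x on α
  have hmulα : ∀ x : L, x * α = ((b.repr x 1) * u) • (1 : L) + (b.repr x 0) • α := by
    intro x
    conv_lhs => rw [decomp x]
    simp only [hsmul, map_mul]
    linear_combination (algebraMap K L (b.repr x 1)) * hαα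
  -- the homomorphism
  refine ⟨(DistribMulAction.toModuleAut K L).comp (normOneSubgroup q L).subtype, ?_, ?_, ?_⟩
  · intro c v; rfl
  · intro c d h
    apply Subtype.ext; apply Units.ext
    have := congrArg (fun e : L ≃ₗ[K] L => e 1) h
    simpa [Units.smul_def] using this
  · intro f
    constructor
    · rintro ⟨c, rfl⟩
      have hcmem : ((c : Lˣ)) ^ (q + 1) = 1 := c.2
      have hcL : (((c : Lˣ) : L)) ^ (q + 1) = 1 := by
        rw [← Units.val_pow_eq_pow_val, hcmem, Units.val_one]
      set cl : L := ((c : Lˣ) : L) with hcl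
      constructor
      · intro v
        show (cl * v) ^ (q + 1) = v ^ (q + 1)
        rw [mul_pow, hcL, one_mul]
      · have h1 : (((DistribMulAction.toModuleAut K L).comp
            (normOneSubgroup q L).subtype) c : L →ₗ[K] L) 1 =
            (b.repr cl 0) • (1 : L) + (b.repr cl 1) • α := by
          show cl * 1 = _
          rw [mul_one]; exact decomp cl
        have h2 : (((DistribMulAction.toModuleAut K L).comp
            (normOneSubgroup q L).subtype) c : L →ₗ[K] L) α =
            ((b.repr cl 1) * u) • (1 : L) + (b.repr cl 0) • α := by
          show cl * α = _
          exact hmulα cl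
        rw [detcalc _ _ _ _ _ h1 h2]
        have hn := hnorm cl
        rw [hcL] at hn
        have : (b.repr cl 0) ^ 2 - (b.repr cl 1) ^ 2 * u = 1 :=
          (algebraMap K L).injective (by rw [← hn, map_one])
        linear_combination this
    · rintro ⟨hfnorm, hfdet⟩
      set c : L := f 1 with hc
      have hc0 : c ≠ 0 := by
        intro h
        have : (1 : L) = 0 := f.injective (by rw [map_zero, ← h])
        exact one_ne_zero this
      have hcN : c ^ (q + 1) = 1 := by
        have := hfnorm 1
        rwa [one_pow] at this
      set β : L := c⁻¹ * f α with hβdef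
      have hfα : f α = c * β := by
        rw [hβdef]; field_simp
      have hβN : β ^ (q + 1) = α ^ (q + 1) := by
        have := hfnorm α
        rw [hfα, mul_pow, hcN, one_mul] at this
        exact this
      have expand : ∀ x : L, (1 + x) ^ (q + 1) = 1 + x + x ^ q + x ^ (q + 1) := by
        intro x
        rw [pow_succ, add_pow_char, one_pow, pow_succ]
        ring
      have hβT : β + β ^ q = 0 := by
        have h0 := hfnorm (1 + α)
        rw [map_add, ← hc, hfα] at h0
        have h0' : (c * (1 + β)) ^ (q + 1) = (1 + α) ^ (q + 1) := by
          rw [mul_add, mul_one]; exact h0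
        rw [mul_pow, hcN, one_mul, expand, expand] at h0'
        have hαT : α + α ^ q = 0 := by rw [hαq]; ring
        linear_combination h0' - hβN + hαT
      have hβq : β ^ q = -β := by linear_combination hβT
      have hβ2 : β ^ 2 = α ^ 2 := by
        have e1 : β ^ (q + 1) = -β ^ 2 := by rw [pow_succ, hβq]; ring
        have e2 : α ^ (q + 1) = -α ^ 2 := by rw [pow_succ, hαq]; ring
        linear_combination -hβN + e1 - e2
      have hβor : β = α ∨ β = -α := by
        have hfac : (β - α) * (β + α) = 0 := by linear_combination hβ2
        rcases mul_eq_zero.mp hfac with h | h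
        · left; linear_combination h
        · right; linear_combination h
      rcases hβor with hβ | hβ
      · -- f is multiplication by c
        have hcu : (Units.mk0 c hc0) ∈ normOneSubgroup q L := by
          show (Units.mk0 c hc0) ^ (q + 1) = 1
          apply Units.ext
          rw [Units.val_pow_eq_pow_val, Units.val_one]
          exact hcN
        refine ⟨⟨Units.mk0 c hc0, hcu⟩, ?_⟩
        apply LinearEquiv.toLinearMap_injective
        apply b.ext
        intro i
        fin_cases i
        · show c * b 0 = f (b 0)
          rw [hb0, mul_one, hc]
        · show c * b 1 = f (b 1)
          rw [hb1, hfα, hβ]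
      · -- contradiction via determinant
        exfalso
        set s := b.repr c 0 with hs
        set t := b.repr c 1 with ht
        have h1 : (f : L →ₗ[K] L) 1 = s • (1 : L) + t • α := by
          show f 1 = _
          rw [← hc]; exact decomp c
        have h2 : (f : L →ₗ[K] L) α = (-(t * u)) • (1 : L) + (-s) • α := by
          show f α = _
          rw [hfα, hβ, neg_smul, neg_smul, mul_neg]
          have := hmulα c
          rw [← hs, ← ht] at this
          linear_combination -this
        have hdet := detcalc _ _ _ _ _ h1 h2
        rw [hfdet] at hdet
        have hn := hnorm c
        rw [hcN, ← hs, ← ht] at hn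
        have hone : s ^ 2 - t ^ 2 * u = 1 :=
          (algebraMap K L).injective (by rw [← hn, map_one])
        have : (2 : K) = 0 := by linear_combination hdet - hone
        exact h2K this
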